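/- Let K be a number field. An element a of O_K is nonzero if and only if there exist x, y in O_K such that (2x-1)(3x-1) = y·a. -/

import Mathlib

open NumberField

lemma crt_lemma (k m : ℕ) (hm2 : ¬ 2 ∣ m) (hmpos : m ≠ 0) :
    ∃ x : ℤ, ((2^k * m : ℕ) : ℤ) ∣ (2*x-1)*(3*x-1) := by
  have hcop2 : Nat.Coprime 2 m := (Nat.Prime.coprime_iff_not_dvd Nat.prime_two).mpr hm2
  have hcop : Nat.Coprime (2^k) m := hcop2.pow_left _
  have h3 : Nat.Coprime 3 (2^k) := (Nat.coprime_two_right.mpr (by decide)).pow_right _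
  have : NeZero (2^k * m) := ⟨by positivity⟩
  let e := ZMod.chineseRemainder hcop
  let u3 : (ZMod (2^k))ˣ := ZMod.unitOfCoprime 3 h3
  let u2 : (ZMod m)ˣ := ZMod.unitOfCoprime 2 hcop2
  set x' : ZMod (2^k * m) := e.symm (((u3⁻¹ : (ZMod (2^k))ˣ) : ZMod (2^k)), ((u2⁻¹ : (ZMod m)ˣ) : ZMod m)) with hx'
  have hzero : (2*x'-1)*(3*x'-1) = 0 := by
    apply e.injective
    rw [map_mul, map_sub, map_sub, map_mul, map_mul, map_one, map_zero]
    rw [hx', RingEquiv.apply_symm_apply]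
    have h2k : (e 2 : ZMod (2^k) × ZMod m) = (2, 2) := by
      have : (2 : ZMod (2^k * m)) = ((2:ℕ) : ZMod (2^k * m)) := by norm_cast
      rw [this, map_natCast]; norm_cast
    have h3k : (e 3 : ZMod (2^k) × ZMod m) = (3, 3) := by
      have : (3 : ZMod (2^k * m)) = ((3:ℕ) : ZMod (2^k * m)) := by norm_cast
      rw [this, map_natCast]; norm_cast
    rw [h2k, h3k]
    have h3inv : (3 : ZMod (2^k)) * ((u3⁻¹ : (ZMod (2^k))ˣ) : ZMod (2^k)) = 1 := by
      have h : ((u3 : ZMod (2^k))) = 3 := by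
        have := ZMod.coe_unitOfCoprime 3 h3; push_cast at this; exact this
      rw [← h]; exact u3.mul_inv
    have h2inv : (2 : ZMod m) * ((u2⁻¹ : (ZMod m)ˣ) : ZMod m) = 1 := by
      have h : ((u2 : ZMod m)) = 2 := by
        have := ZMod.coe_unitOfCoprime 2 hcop2; push_cast at this; exact this
      rw [← h]; exact u2.mul_inv
    refine Prod.ext ?_ ?_ <;>
      simp only [Prod.fst_mul, Prod.fst_sub, Prod.fst_one, Prod.fst_zero,
        Prod.snd_mul, Prod.snd_sub, Prod.snd_one, Prod.snd_zero]
    · rw [h3inv]; ring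
    · rw [h2inv]; ring
  refine ⟨(x'.val : ℤ), ?_⟩
  have h0 : ((((2*(x'.val:ℤ)-1)*(3*(x'.val:ℤ)-1)) : ℤ) : ZMod (2^k*m)) = 0 := by
    push_cast
    rw [ZMod.natCast_val, ZMod.cast_id]
    exact hzero
  exact_mod_cast (ZMod.intCast_zmod_eq_zero_iff_dvd _ _).mp h0

lemma int_lemma (N : ℤ) (hN : N ≠ 0) : ∃ x : ℤ, N ∣ (2*x-1)*(3*x-1) := by
  set n := N.natAbs with hn'
  have hn : n ≠ 0 := Int.natAbs_ne_zero.mpr hN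
  obtain ⟨x, hx⟩ := crt_lemma (n.factorization 2) (n / 2 ^ n.factorization 2)
    (Nat.not_dvd_ordCompl Nat.prime_two hn) (Nat.ordCompl_pos 2 hn).ne'
  rw [Nat.ordProj_mul_ordCompl_eq_self n 2] at hx
  exact ⟨x, Int.natAbs_dvd.mp hx⟩

lemma no_inv (K : Type*) [Field K] [NumberField K] (c : ℤ) (hc : ¬ IsUnit c) (x : 𝓞 K) :
    (c : 𝓞 K) * x ≠ 1 := by
  intro h
  have hc0 : (c : ℚ) ≠ 0 := by
    intro h0
    have hcz : c = 0 := by exact_mod_cast h0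
    rw [hcz] at h
    simp at h
  have hxK : (algebraMap (𝓞 K) K x) = algebraMap ℚ K (c : ℚ)⁻¹ := by
    have h1 : (c : K) * (algebraMap (𝓞 K) K x) = 1 := by
      have := congrArg (algebraMap (𝓞 K) K) h
      rw [map_mul, map_one, map_intCast] at this
      exact this
    have h2 : (c : K) * algebraMap ℚ K (c : ℚ)⁻¹ = 1 := by
      rw [show (c : K) = algebraMap ℚ K (c : ℚ) from (map_intCast (algebraMap ℚ K) c).symm,
        ← map_mul, mul_inv_cancel₀ hc0, map_one]
    have hcK : (c : K) ≠ 0 := by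
      rw [show (c : K) = algebraMap ℚ K (c : ℚ) from (map_intCast (algebraMap ℚ K) c).symm]
      simpa using hc0
    exact mul_left_cancel₀ hcK (h1.trans h2.symm)
  have hint : IsIntegral ℤ ((c : ℚ)⁻¹) := by
    have hxi : IsIntegral ℤ (algebraMap (𝓞 K) K x) := x.isIntegral_coe
    rw [hxK] at hxi
    exact (isIntegral_algebraMap_iff (algebraMap ℚ K).injective).mp hxi
  obtain ⟨z, hz⟩ := IsIntegrallyClosed.isIntegral_iff.mp hint
  apply hc
  have : (c * z : ℚ) = 1 := by
    rw [show ((z:ℤ):ℚ) = algebraMap ℤ ℚ z from rfl, hz, mul_inv_cancel₀ hc0]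
  exact IsUnit.of_mul_eq_one z (by exact_mod_cast this)

theorem stmt_1 (K : Type*) [Field K] [NumberField K] (a : 𝓞 K) :
    a ≠ 0 ↔ ∃ x y : 𝓞 K, (2 * x - 1) * (3 * x - 1) = y * a := by
  constructor
  · intro ha
    set I := Ideal.span {a} with hI
    have hN0 : (Ideal.absNorm I : ℤ) ≠ 0 := by
      simp only [ne_eq, Int.natCast_eq_zero, Ideal.absNorm_eq_zero_iff, hI,
        Ideal.span_singleton_eq_bot]
      exact ha
    obtain ⟨x, hx⟩ := int_lemma (Ideal.absNorm I : ℤ) hN0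
    have hdvd : a ∣ ((Ideal.absNorm I : ℤ) : 𝓞 K) := by
      rw [← Ideal.mem_span_singleton, ← hI]
      exact_mod_cast Ideal.absNorm_mem I
    have : a ∣ (2 * (x : 𝓞 K) - 1) * (3 * (x : 𝓞 K) - 1) := by
      refine hdvd.trans ?_
      obtain ⟨c, hc⟩ := hx
      refine ⟨(c : 𝓞 K), ?_⟩
      have h2 := congrArg (Int.cast : ℤ → 𝓞 K) hc
      push_cast at h2 ⊢
      linear_combination h2
    obtain ⟨y, hy⟩ := this
    exact ⟨(x : 𝓞 K), y, by rw [hy, mul_comm]⟩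
  · rintro ⟨x, y, hxy⟩ ha
    rw [ha, mul_zero] at hxy
    rcases mul_eq_zero.mp hxy with h | h
    · exact no_inv K 2 (by decide) x (by push_cast; linear_combination h)
    · exact no_inv K 3 (by decide) x (by push_cast; linear_combination h)
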